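/- Let d = (d_1, ..., d_n) be the sequence of vertex degrees (with each loop counted twice) of a graph-with-loops on n vertices, listed in decreasing order. Then the sum d_1 + ... + d_n is even and, for each integer k with 1 ≤ k ≤ n, ∑_{i=1}^k d_i ≤ k(k+1) + ∑_{i=k+1}^n min{k, d_i}. -/

import Mathlib

open Finset

/-- Necessity in the Erdős–Gallai type theorem for graphs-with-loops, with loops
counted twice: if a decreasing sequence `d` is the degree sequence of a
graph-with-loops, then its sum is even and
`∑_{i=1}^k d_i ≤ k(k+1) + ∑_{i=k+1}^n min{k, d_i}` for all `1 ≤ k ≤ n`. -/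
theorem stmt_10 (n : ℕ) (d : Fin n → ℕ) (hd : Antitone d)
    (adj : Fin n → Fin n → Bool) (hsymm : ∀ v w, adj v w = adj w v)
    (hdeg : ∀ v, ((univ.filter (fun w => w ≠ v ∧ adj v w = true)).card
              + (if adj v v = true then 2 else 0)) = d v) :
    Even (∑ i, d i) ∧
      ∀ k : ℕ, 1 ≤ k → k ≤ n →
        ∑ i ∈ univ.filter (fun i : Fin n => (i : ℕ) < k), d i
          ≤ k * (k + 1)
            + ∑ i ∈ univ.filter (fun i : Fin n => k ≤ (i : ℕ)), min k (d i) := by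
  classical
  constructor
  · -- evenness via the handshake lemma for simple graphs
    let G : SimpleGraph (Fin n) :=
      { Adj := fun v w => v ≠ w ∧ adj v w = true
        symm := by
          constructor
          intro v w h
          exact ⟨h.1.symm, by rw [hsymm]; exact h.2⟩
        loopless := by constructor; intro v h; exact h.1 rfl }
    haveI : DecidableRel G.Adj := fun v w => instDecidableAnd
    have hdegG : ∀ v, G.degree v
        = (univ.filter (fun w => w ≠ v ∧ adj v w = true)).card := by
      intro v
      rw [← SimpleGraph.card_neighborFinset_eq_degree]
      congr 1
      ext w
      simp only [SimpleGraph.mem_neighborFinset, mem_filter, mem_univ, true_and]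
      constructor
      · rintro ⟨h1, h2⟩; exact ⟨h1.symm, h2⟩
      · rintro ⟨h1, h2⟩; exact ⟨h1.symm, h2⟩
    have hsum : ∑ i, d i = (∑ v, G.degree v) + ∑ v, (if adj v v = true then 2 else 0) := by
      rw [← Finset.sum_add_distrib]
      apply Finset.sum_congr rfl
      intro v _
      rw [hdegG, hdeg]
    rw [hsum]
    apply Even.add
    · rw [SimpleGraph.sum_degrees_eq_twice_card_edges]
      exact even_two_mul _
    · apply Finset.even_sum
      intro v _
      split <;> simp
  · intro k hk1 hkn
    set A := univ.filter (fun i : Fin n => (i : ℕ) < k) with hA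
    set B := univ.filter (fun i : Fin n => k ≤ (i : ℕ)) with hB
    have hcardA : A.card = k := by
      have himg : A.image Fin.val = Finset.range k := by
        ext x
        simp only [hA, mem_image, mem_filter, mem_univ, true_and, Finset.mem_range]
        constructor
        · rintro ⟨i, hi, rfl⟩; exact hi
        · intro hx; exact ⟨⟨x, lt_of_lt_of_le hx hkn⟩, hx, rfl⟩
      have h := Finset.card_image_of_injective A Fin.val_injective
      rw [himg, Finset.card_range] at h
      exact h.symm
    have hAB : A ∪ B = univ := by
      ext i
      simp only [hA, hB, Finset.mem_union, mem_filter, mem_univ, true_and, iff_true]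
      omega
    have hdisj : Disjoint A B := by
      rw [Finset.disjoint_left]
      intro i hiA hiB
      simp only [hA, hB, mem_filter, mem_univ, true_and] at hiA hiB
      omega
    have hunion : ∀ (p : Fin n → Prop) [DecidablePred p],
        (univ.filter p).card = (A.filter p).card + (B.filter p).card := by
      intro p _
      rw [← hAB, Finset.filter_union, Finset.card_union_of_disjoint
        (hdisj.mono (Finset.filter_subset _ _) (Finset.filter_subset _ _))]
    have hsplit : ∀ v ∈ A, d v
        = ((A.filter (fun w => w ≠ v ∧ adj v w = true)).card
            + (if adj v v = true then 2 else 0))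
          + (B.filter (fun w => adj v w = true)).card := by
      intro v hv
      have hBv : B.filter (fun w => w ≠ v ∧ adj v w = true)
          = B.filter (fun w => adj v w = true) := by
        apply Finset.filter_congr
        intro w hw
        simp only [hA, mem_filter, mem_univ, true_and] at hv
        simp only [hB, mem_filter, mem_univ, true_and] at hw
        have hne : w ≠ v := by
          intro h
          subst h
          omega
        simp [hne]
      rw [← hdeg v, hunion, hBv]
      ring
    rw [Finset.sum_congr rfl hsplit, Finset.sum_add_distrib]
    have h1 : ∑ v ∈ A, ((A.filter (fun w => w ≠ v ∧ adj v w = true)).card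
        + (if adj v v = true then 2 else 0)) ≤ k * (k + 1) := by
      calc ∑ v ∈ A, ((A.filter (fun w => w ≠ v ∧ adj v w = true)).card
            + (if adj v v = true then 2 else 0))
          ≤ ∑ _v ∈ A, (k + 1) := by
            apply Finset.sum_le_sum
            intro v hv
            have hc : (A.filter (fun w => w ≠ v ∧ adj v w = true)).card ≤ k - 1 := by
              have hsub : A.filter (fun w => w ≠ v ∧ adj v w = true) ⊆ A.erase v := by
                intro w hw
                simp only [mem_filter] at hw
                exact Finset.mem_erase.2 ⟨hw.2.1, hw.1⟩
              calc (A.filter (fun w => w ≠ v ∧ adj v w = true)).card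
                  ≤ (A.erase v).card := Finset.card_le_card hsub
                _ = k - 1 := by rw [Finset.card_erase_of_mem hv, hcardA]
            have hif : (if adj v v = true then 2 else 0) ≤ 2 := by split <;> omega
            omega
        _ = k * (k + 1) := by rw [Finset.sum_const, hcardA, smul_eq_mul]
    have h2 : ∑ v ∈ A, (B.filter (fun w => adj v w = true)).card
        ≤ ∑ w ∈ B, min k (d w) := by
      have hcomm : ∑ v ∈ A, (B.filter (fun w => adj v w = true)).card
          = ∑ w ∈ B, (A.filter (fun v => adj v w = true)).card := by
        simp only [Finset.card_filter]
        exact Finset.sum_comm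
      rw [hcomm]
      apply Finset.sum_le_sum
      intro w hw
      apply le_min
      · calc (A.filter (fun v => adj v w = true)).card
            ≤ A.card := Finset.card_le_card (Finset.filter_subset _ _)
          _ = k := hcardA
      · rw [← hdeg w]
        have hsub : A.filter (fun v => adj v w = true)
            ⊆ univ.filter (fun v => v ≠ w ∧ adj w v = true) := by
          intro v hv
          simp only [hA, mem_filter, mem_univ, true_and] at hv ⊢
          simp only [hB, mem_filter, mem_univ, true_and] at hw
          refine ⟨?_, by rw [← hsymm]; exact hv.2⟩
          intro h
          subst h
          omega
        calc (A.filter (fun v => adj v w = true)).card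
            ≤ (univ.filter (fun v => v ≠ w ∧ adj w v = true)).card :=
              Finset.card_le_card hsub
          _ ≤ _ := Nat.le_add_right _ _
    exact add_le_add h1 h2
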